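/- For two autonomous affine models G: x_{k+1} = A x_k + f, y_k = C x_k and Ḡ: x̄_{k+1} = Ā x̄_k + f̄, ȳ_k = C̄ x̄_k, both with state dimension n, the following are equivalent: (i) Ḡ is not T-detectable for G for any finite T, i.e. for every T there exist initial states x_0, x̄_0 with y_k = ȳ_k for all k = 0,…,T−1; (ii) there exist initial states x_0, x̄_0 with y_k = ȳ_k for all k = 0,…,2n (i.e. Ḡ is not (2n+1)-detectable for G). Moreover, in that case the same pair of initial states yields y_k = ȳ_k for all k ∈ ℕ. -/
import Mathlib


open Matrix

/-- Trajectory of the autonomous affine system `x_{k+1} = A x_k + f` from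
initial state `x0`. -/
def affTraj {n : ℕ} (A : Matrix (Fin n) (Fin n) ℝ) (f : Fin n → ℝ)
    (x0 : Fin n → ℝ) : ℕ → Fin n → ℝ
  | 0 => x0
  | k + 1 => A.mulVec (affTraj A f x0 k) + f

open Polynomial in
lemma key_lemma {W U : Type*} [AddCommGroup W] [Module ℝ W]
    [Module.Finite ℝ W] [Module.Free ℝ W] [AddCommGroup U] [Module ℝ U]
    (L : W →ₗ[ℝ] W) (φ : W →ₗ[ℝ] U) (v : W)
    (h : ∀ k < Module.finrank ℝ W, φ ((L ^ k) v) = 0) :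
    ∀ k, φ ((L ^ k) v) = 0 := by
  set N := Module.finrank ℝ W with hN
  have hd : L.charpoly.natDegree = N := L.charpoly_natDegree
  have hsum : (0 : Module.End ℝ W) =
      ∑ i ∈ Finset.range (N + 1), L.charpoly.coeff i • L ^ i := by
    have := L.aeval_self_charpoly
    rw [aeval_eq_sum_range' (n := N + 1) (by omega)] at this
    exact this.symm
  have hcoeff : L.charpoly.coeff N = 1 := by
    have := L.charpoly_monic
    rw [← hd]; exact this.coeff_natDegree
  have hLN : L ^ N = -∑ i ∈ Finset.range N, L.charpoly.coeff i • L ^ i := by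
    rw [Finset.sum_range_succ, hcoeff, one_smul] at hsum
    exact eq_neg_of_add_eq_zero_right hsum.symm
  intro k
  induction k using Nat.strong_induction_on with
  | _ k ih =>
    rcases lt_or_ge k N with hk | hk
    · exact h k hk
    · have : (L ^ k) v = (L ^ (k - N)) ((L ^ N) v) := by
        rw [← Module.End.mul_apply, ← pow_add, Nat.sub_add_cancel hk]
      rw [this, hLN]
      simp only [LinearMap.neg_apply, LinearMap.sum_apply, LinearMap.smul_apply,
        map_neg, map_sum, _root_.map_smul]
      rw [neg_eq_zero]
      apply Finset.sum_eq_zero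
      intro i hi
      have hi' : i < N := Finset.mem_range.mp hi
      have : (L ^ (k - N)) ((L ^ i) v) = (L ^ (k - N + i)) v := by
        rw [pow_add, Module.End.mul_apply]
      rw [this, ih (k - N + i) (by omega)]
      simp

/-- The joint linear lift of the two affine systems. -/
noncomputable def sysL {n : ℕ} (A Ab : Matrix (Fin n) (Fin n) ℝ)
    (f fb : Fin n → ℝ) :
    ((Fin n → ℝ) × (Fin n → ℝ) × ℝ) →ₗ[ℝ] ((Fin n → ℝ) × (Fin n → ℝ) × ℝ) where
  toFun w := (A.mulVec w.1 + w.2.2 • f, Ab.mulVec w.2.1 + w.2.2 • fb, w.2.2)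
  map_add' u v := by
    ext i <;> simp [Matrix.mulVec_add, add_smul] <;> ring
  map_smul' c u := by
    ext i <;> simp [Matrix.mulVec_smul, smul_smul] <;> ring

/-- The output-difference map. -/
noncomputable def sysD {n p : ℕ} (C Cb : Matrix (Fin p) (Fin n) ℝ) :
    ((Fin n → ℝ) × (Fin n → ℝ) × ℝ) →ₗ[ℝ] (Fin p → ℝ) where
  toFun w := C.mulVec w.1 - Cb.mulVec w.2.1
  map_add' u v := by
    ext i <;> simp [Matrix.mulVec_add] <;> ring
  map_smul' c u := by
    ext i <;> simp [Matrix.mulVec_smul] <;> ring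

lemma sysL_pow_apply {n : ℕ} (A Ab : Matrix (Fin n) (Fin n) ℝ)
    (f fb : Fin n → ℝ) (x0 xb0 : Fin n → ℝ) (k : ℕ) :
    ((sysL A Ab f fb) ^ k) (x0, xb0, 1) =
      (affTraj A f x0 k, affTraj Ab fb xb0 k, 1) := by
  induction k with
  | zero => simp [affTraj]
  | succ k ih =>
    rw [pow_succ', Module.End.mul_apply, ih]
    simp [sysL, affTraj]

/-- corollary for affine models.  For two autonomous affine
models `G : x_{k+1} = A x_k + f, y_k = C x_k` and
`Ḡ : x̄_{k+1} = Ā x̄_k + f̄, ȳ_k = C̄ x̄_k` with state dimension `n`, the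
following are equivalent: (i) for every finite horizon `T` there are initial
states whose outputs coincide on `0, …, T-1`; (ii) there are initial states
whose outputs coincide on `0, …, 2n` (i.e. `Ḡ` is not `(2n+1)`-detectable for
`G`).  Moreover, in that case, the same pair of initial states yields matching
outputs for all times. -/
theorem affine_detectability_threshold {n p : ℕ}
    (A Ab : Matrix (Fin n) (Fin n) ℝ) (C Cb : Matrix (Fin p) (Fin n) ℝ)
    (f fb : Fin n → ℝ) :
    ((∀ T : ℕ, ∃ x0 xb0 : Fin n → ℝ, ∀ k < T,
        C.mulVec (affTraj A f x0 k) = Cb.mulVec (affTraj Ab fb xb0 k)) ↔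
      (∃ x0 xb0 : Fin n → ℝ, ∀ k ≤ 2 * n,
        C.mulVec (affTraj A f x0 k) = Cb.mulVec (affTraj Ab fb xb0 k))) ∧
    (∀ x0 xb0 : Fin n → ℝ,
      (∀ k ≤ 2 * n,
        C.mulVec (affTraj A f x0 k) = Cb.mulVec (affTraj Ab fb xb0 k)) →
      ∀ k : ℕ,
        C.mulVec (affTraj A f x0 k) = Cb.mulVec (affTraj Ab fb xb0 k)) := by
  have hrank : Module.finrank ℝ ((Fin n → ℝ) × (Fin n → ℝ) × ℝ) = 2 * n + 1 := by
    simp [Module.finrank_prod]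
    ring
  have main : ∀ x0 xb0 : Fin n → ℝ,
      (∀ k ≤ 2 * n,
        C.mulVec (affTraj A f x0 k) = Cb.mulVec (affTraj Ab fb xb0 k)) →
      ∀ k : ℕ,
        C.mulVec (affTraj A f x0 k) = Cb.mulVec (affTraj Ab fb xb0 k) := by
    intro x0 xb0 h k
    have hzero : ∀ j < Module.finrank ℝ ((Fin n → ℝ) × (Fin n → ℝ) × ℝ),
        (sysD C Cb) (((sysL A Ab f fb) ^ j) (x0, xb0, 1)) = 0 := by
      intro j hj
      rw [hrank] at hj
      rw [sysL_pow_apply]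
      show C.mulVec (affTraj A f x0 j) - Cb.mulVec (affTraj Ab fb xb0 j) = 0
      rw [h j (by omega), sub_self]
    have := key_lemma (sysL A Ab f fb) (sysD C Cb) (x0, xb0, 1) hzero k
    rw [sysL_pow_apply] at this
    have h2 : C.mulVec (affTraj A f x0 k) - Cb.mulVec (affTraj Ab fb xb0 k) = 0 := this
    exact sub_eq_zero.mp h2
  refine ⟨⟨fun h => ?_, fun h T => ?_⟩, main⟩
  · obtain ⟨x0, xb0, hx⟩ := h (2 * n + 1)
    exact ⟨x0, xb0, fun k hk => hx k (by omega)⟩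
  · obtain ⟨x0, xb0, hx⟩ := h
    exact ⟨x0, xb0, fun k _ => main x0 xb0 hx k⟩
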